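/- If every eigenvalue of a quasi-permutation matrix M = D·P (D invertible diagonal, P the permutation matrix of s ∈ S_N) restricted to an invariant coordinate subspace corresponding to a cycle of s of length k is a k-th root of a fixed nonzero complex number, then the characteristic polynomial of M factors as the product over the cycles c of s of (x^{|c|} − d_c), where d_c is the product of the diagonal entries of D over the indices in the cycle c. -/

import Mathlib

open Matrix Polynomial
open Equiv Equiv.Perm Finset



theorem Equiv.Perm.apply_inv_self {α : Type*} (f : Equiv.Perm α) (x : α) : f (f⁻¹ x) = x :=
  f.apply_symm_apply x

theorem Equiv.Perm.inv_apply_self {α : Type*} (f : Equiv.Perm α) (x : α) : f⁻¹ (f x) = x :=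
  f.symm_apply_apply x

namespace Stmt5Aux

variable {α : Type*} [Fintype α] [DecidableEq α]

/-- `i` belongs to the support of some cycle in `T`. -/
def cond (T : Finset (Perm α)) (i : α) : Prop := ∃ c ∈ T, i ∈ c.support

instance (T : Finset (Perm α)) (i : α) : Decidable (cond T i) :=
  inferInstanceAs (Decidable (∃ c ∈ T, i ∈ c.support))

lemma cond_apply_iff {s : Perm α} {T : Finset (Perm α)}
    (hT : T ⊆ s.cycleFactorsFinset) (i : α) : cond T (s i) ↔ cond T i := by
  constructor
  · rintro ⟨c, hc, hi⟩
    exact ⟨c, hc, (Equiv.Perm.mem_cycleFactorsFinset_support (hT hc) i).mp hi⟩ 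
  · rintro ⟨c, hc, hi⟩
    exact ⟨c, hc, (Equiv.Perm.mem_cycleFactorsFinset_support (hT hc) i).mpr hi⟩

lemma cond_inv_iff {s : Perm α} {T : Finset (Perm α)}
    (hT : T ⊆ s.cycleFactorsFinset) (i : α) : cond T (s⁻¹ i) ↔ cond T i := by
  conv_rhs => rw [← Equiv.Perm.apply_inv_self s i]
  exact (cond_apply_iff hT _).symm

/-- The permutation acting as `s⁻¹` on the supports of cycles in `T` and identity elsewhere. -/
def σT (s : Perm α) (T : Finset (Perm α)) (hT : T ⊆ s.cycleFactorsFinset) : Perm α where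
  toFun i := if cond T i then s⁻¹ i else i
  invFun i := if cond T i then s i else i
  left_inv i := by
    by_cases h : cond T i
    · simp [h, show cond T (s.symm i) from (cond_inv_iff hT i).mpr h]
    · simp [h]
  right_inv i := by
    by_cases h : cond T i
    · simp [h, (cond_apply_iff hT i).mpr h]
    · simp [h]

lemma σT_apply (s : Perm α) (T : Finset (Perm α)) (hT : T ⊆ s.cycleFactorsFinset) (i : α) :
    σT s T hT i = if cond T i then s⁻¹ i else i := rfl

lemma disj_supports {s c c' : Perm α} (hc : c ∈ s.cycleFactorsFinset)
    (hc' : c' ∈ s.cycleFactorsFinset) (h : c ≠ c') : Disjoint c.support c'.support :=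
  Equiv.Perm.Disjoint.disjoint_support
    (s.cycleFactorsFinset_pairwise_disjoint (Finset.mem_coe.mpr hc) (Finset.mem_coe.mpr hc') h)

lemma σT_empty (s : Perm α) (h : (∅ : Finset (Perm α)) ⊆ s.cycleFactorsFinset) :
    σT s ∅ h = 1 := by
  ext i
  rw [σT_apply, if_neg]
  · rfl
  · rintro ⟨c, hc, -⟩
    exact absurd hc (Finset.notMem_empty c)

lemma σT_insert {s c : Perm α} {T : Finset (Perm α)} (hc : c ∈ s.cycleFactorsFinset)
    (hT : T ⊆ s.cycleFactorsFinset) (hcT : c ∉ T) :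
    σT s (insert c T) (Finset.insert_subset hc hT) = c⁻¹ * σT s T hT := by
  ext i
  simp only [Equiv.Perm.mul_apply, σT_apply]
  by_cases h1 : i ∈ c.support
  · have hcond : cond (insert c T) i := ⟨c, Finset.mem_insert_self c T, h1⟩
    have hnT : ¬ cond T i := by
      rintro ⟨c', hc', hi'⟩
      have hne : c ≠ c' := fun h => hcT (h ▸ hc')
      exact (Finset.disjoint_left.mp (disj_supports hc (hT hc') hne)) h1 hi'
    rw [if_pos hcond, if_neg hnT]
    have h2 : c⁻¹ i ∈ c.support := by
      rw [← Equiv.Perm.apply_mem_support (f := c), Equiv.Perm.apply_inv_self]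
      exact h1
    have h3 : s (c⁻¹ i) = i := by
      rw [← (Equiv.Perm.mem_cycleFactorsFinset_iff.mp hc).2 _ h2, Equiv.Perm.apply_inv_self]
    apply s.injective
    rw [h3, Equiv.Perm.apply_inv_self]
  · have hiff : cond (insert c T) i ↔ cond T i := by
      constructor
      · rintro ⟨c', hc', hi'⟩
        rcases Finset.mem_insert.mp hc' with rfl | hc''
        · exact absurd hi' h1
        · exact ⟨c', hc'', hi'⟩
      · rintro ⟨c', hc', hi'⟩
        exact ⟨c', Finset.mem_insert_of_mem hc', hi'⟩
    by_cases h2 : cond T i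
    · rw [if_pos (hiff.mpr h2), if_pos h2]
      have : s⁻¹ i ∉ c.support := by
        rw [← Equiv.Perm.mem_cycleFactorsFinset_support hc (s⁻¹ i), Equiv.Perm.apply_inv_self]
        exact h1
      rw [← Equiv.Perm.support_inv] at this
      exact (Equiv.Perm.notMem_support.mp this).symm
    · rw [if_neg (fun h => h2 (hiff.mp h)), if_neg h2]
      rw [← Equiv.Perm.support_inv] at h1
      exact (Equiv.Perm.notMem_support.mp h1).symm

lemma sign_σT (s : Perm α) :
    ∀ (T : Finset (Perm α)) (hT : T ⊆ s.cycleFactorsFinset),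
      Equiv.Perm.sign (σT s T hT) = ∏ c ∈ T, Equiv.Perm.sign c := by
  intro T
  induction T using Finset.induction_on with
  | empty => intro hT; rw [σT_empty, _root_.map_one, Finset.prod_empty]
  | @insert c T hcT ih =>
    intro hT
    have hc : c ∈ s.cycleFactorsFinset := hT (Finset.mem_insert_self c T)
    have hT' : T ⊆ s.cycleFactorsFinset := fun x hx => hT (Finset.mem_insert_of_mem hx)
    rw [show σT s (insert c T) hT = c⁻¹ * σT s T hT' from σT_insert hc hT' hcT,
      _root_.map_mul, _root_.map_inv, ih hT', Finset.prod_insert hcT]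
    congr 1
    simp


lemma moved_propagate {σ s : Perm α} (hQ : ∀ i, σ i = i ∨ s (σ i) = i)
    {c : Perm α} (hc : c ∈ s.cycleFactorsFinset) {i j : α}
    (hi : i ∈ c.support) (hj : j ∈ c.support) (hmove : σ i ≠ i) : σ j ≠ j := by
  have hQ' : ∀ x, σ x ≠ x → σ x = s⁻¹ x := by
    intro x hx
    rcases hQ x with h | h
    · exact absurd h hx
    · exact s.injective (by rw [h, Equiv.Perm.apply_inv_self])
  have hstep : ∀ x, σ x ≠ x → σ (s⁻¹ x) ≠ s⁻¹ x := by
    intro x hx hcon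
    have h1 := hQ' x hx
    have h2 : σ (s⁻¹ x) = σ x := by rw [hcon, h1]
    have h3 : s⁻¹ x = x := σ.injective h2
    exact hx (by rw [h1, h3])
  have hs_inv : ∀ x ∈ σ.support, s⁻¹ x ∈ σ.support := by
    intro x hx
    rw [Equiv.Perm.mem_support] at hx ⊢
    exact hstep x hx
  have himg : σ.support.image (fun x => s⁻¹ x) = σ.support := by
    apply Finset.eq_of_subset_of_card_le
    · intro y hy
      obtain ⟨x, hx, rfl⟩ := Finset.mem_image.mp hy
      exact hs_inv x hx
    · rw [Finset.card_image_of_injective _ (s⁻¹).injective]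
  have hs_app : ∀ x ∈ σ.support, s x ∈ σ.support := by
    intro x hx
    rw [← himg] at hx
    obtain ⟨y, hy, hxy⟩ := Finset.mem_image.mp hx
    rw [← hxy, Equiv.Perm.apply_inv_self]
    exact hy
  have hzpow : ∀ (m : ℤ), ∀ x ∈ σ.support, (s ^ m) x ∈ σ.support := by
    intro m
    induction m using Int.induction_on with
    | zero => simp
    | succ k ih =>
      intro x hx
      rw [_root_.zpow_add_one, Equiv.Perm.mul_apply]
      exact ih _ (hs_app x hx)
    | pred k ih =>
      intro x hx
      rw [_root_.zpow_sub_one, Equiv.Perm.mul_apply]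
      exact ih _ (hs_inv x hx)
  have hic := Equiv.Perm.isCycleOn_support_of_mem_cycleFactorsFinset hc
  obtain ⟨m, hm⟩ := hic.2 (Finset.mem_coe.mpr hi) (Finset.mem_coe.mpr hj)
  rw [← Equiv.Perm.mem_support, ← hm]
  exact hzpow m i (Equiv.Perm.mem_support.mpr hmove)


def Tof (s σ : Perm α) : Finset (Perm α) :=
  s.cycleFactorsFinset.filter (fun c => ∃ i ∈ c.support, σ i ≠ i)

lemma Tof_subset (s σ : Perm α) : Tof s σ ⊆ s.cycleFactorsFinset :=
  Finset.filter_subset _ _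

lemma Q_σT (s : Perm α) (T : Finset (Perm α)) (hT : T ⊆ s.cycleFactorsFinset) (i : α) :
    σT s T hT i = i ∨ s (σT s T hT i) = i := by
  rw [σT_apply]
  by_cases h : cond T i
  · rw [if_pos h]
    exact Or.inr (Equiv.Perm.apply_inv_self s i)
  · rw [if_neg h]
    exact Or.inl rfl

lemma ne_of_mem_support_cycle {s c : Perm α} (hc : c ∈ s.cycleFactorsFinset)
    {i : α} (hi : i ∈ c.support) : s⁻¹ i ≠ i := by
  intro h
  have h1 : s i = i := by conv_lhs => rw [← h, Equiv.Perm.apply_inv_self]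
  have h2 := Equiv.Perm.mem_cycleFactorsFinset_support_le hc hi
  exact (Equiv.Perm.mem_support.mp h2) h1

lemma Tof_σT (s : Perm α) (T : Finset (Perm α)) (hT : T ⊆ s.cycleFactorsFinset) :
    Tof s (σT s T hT) = T := by
  ext c
  simp only [Tof, Finset.mem_filter]
  constructor
  · rintro ⟨hc, i, hi, hne⟩
    by_contra hcT
    apply hne
    rw [σT_apply, if_neg]
    rintro ⟨c', hc', hi'⟩
    have hcc' : c ≠ c' := fun h => hcT (h ▸ hc')
    exact (Finset.disjoint_left.mp (disj_supports hc (hT hc') hcc')) hi hi'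
  · intro hcT
    have hc := hT hcT
    obtain ⟨i, hi⟩ := (Equiv.Perm.mem_cycleFactorsFinset_iff.mp hc).1.nonempty_support
    refine ⟨hc, i, hi, ?_⟩
    rw [σT_apply, if_pos ⟨c, hcT, hi⟩]
    exact ne_of_mem_support_cycle hc hi

lemma σT_Tof {s σ : Perm α} (hQ : ∀ i, σ i = i ∨ s (σ i) = i) :
    σT s (Tof s σ) (Tof_subset s σ) = σ := by
  ext i
  rw [σT_apply]
  by_cases h : cond (Tof s σ) i
  · obtain ⟨c, hc, hi⟩ := h
    rw [if_pos ⟨c, hc, hi⟩]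
    simp only [Tof, Finset.mem_filter] at hc
    obtain ⟨hc, j, hj, hjne⟩ := hc
    have hine : σ i ≠ i := moved_propagate hQ hc hj hi hjne
    rcases hQ i with h1 | h1
    · exact absurd h1 hine
    · exact (s.injective (by rw [h1, Equiv.Perm.apply_inv_self])).symm
  · rw [if_neg h]
    by_contra hne
    have hne : σ i ≠ i := fun h' => hne h'.symm
    have h1 : s (σ i) = i := (hQ i).resolve_left hne
    have h2 : s i ≠ i := by
      intro h2
      apply hne
      apply s.injective
      rw [h1, h2]
    have h3 := Equiv.Perm.mem_support_iff_mem_support_of_mem_cycleFactorsFinset.mp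
      (Equiv.Perm.mem_support.mpr h2)
    obtain ⟨c, hc, hi⟩ := h3
    exact h ⟨c, Finset.mem_filter.mpr ⟨hc, i, hi, hne⟩, hi⟩

end Stmt5Aux

/-- Let `M = D·P` with `D = diag(d_1,…,d_N)` invertible and `P` the permutation
matrix of `s ∈ S_N`, so `M_{j,l} = d_j δ_{s j, l}`. If every eigenvalue of `M`
whose eigenvector is supported on the coordinate subspace of a cycle `c` of `s`
of length `k = |c|` is a `k`-th root of the fixed nonzero number
`d_c = ∏_{j ∈ c} d_j`, then the characteristic polynomial of `M` factors as the
product over the cycles `c` of `s` (fixed points counting as 1-cycles) of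
`(X^{|c|} − d_c)`. -/
theorem stmt5 (N : ℕ) (d : Fin N → ℂ) (hd : ∀ j, d j ≠ 0)
    (s : Equiv.Perm (Fin N)) (M : Matrix (Fin N) (Fin N) ℂ)
    (hM : ∀ j l, M j l = if s j = l then d j else 0)
    (hyp : ∀ c ∈ s.cycleFactorsFinset, ∀ z : ℂ, ∀ v : Fin N → ℂ, v ≠ 0 →
      (∀ j, j ∉ c.support → v j = 0) → M.mulVec v = z • v →
      z ^ c.support.card = ∏ j ∈ c.support, d j) :
    M.charpoly =
      (∏ c ∈ s.cycleFactorsFinset,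
        (X ^ c.support.card - C (∏ j ∈ c.support, d j))) *
      ∏ j ∈ Finset.univ.filter (fun j => s j = j), (X - C (d j)) := by
  classical
  -- Step 1: characteristic polynomial as a sum over permutations with nonzero contribution
  have h1 : M.charpoly = ∑ σ ∈ Finset.univ.filter
        (fun σ : Equiv.Perm (Fin N) => ∀ i, σ i = i ∨ s (σ i) = i),
      ((Equiv.Perm.sign σ : ℤ) : Polynomial ℂ) * ∏ i, charmatrix M (σ i) i := by
    rw [Matrix.charpoly, Matrix.det_apply']
    refine Eq.symm (Finset.sum_filter_of_ne ?_)
    intro σ _ hne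
    by_contra hQ
    push_neg at hQ
    obtain ⟨i, hi1, hi2⟩ := hQ
    apply hne
    have hz : charmatrix M (σ i) i = 0 := by
      rw [charmatrix_apply_ne _ _ _ hi1, hM, if_neg hi2, map_zero, neg_zero]
    exact mul_eq_zero_of_right _
      (Finset.prod_eq_zero (Finset.mem_univ i) (f := fun j => charmatrix M (σ j) j) hz)
  -- Step 2: fixed points are the complement of the support
  have hF : Finset.univ.filter (fun j => s j = j) = s.supportᶜ := by
    ext j
    simp [Equiv.Perm.mem_support]
  -- Step 3: expanding the product over cycles
  have h2 : (∏ c ∈ s.cycleFactorsFinset,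
        ((X : Polynomial ℂ) ^ c.support.card - C (∏ j ∈ c.support, d j)))
      = ∑ T ∈ s.cycleFactorsFinset.powerset,
          (∏ c ∈ T, (- C (∏ j ∈ c.support, d j))) *
            X ^ (∑ c ∈ s.cycleFactorsFinset \ T, c.support.card) := by
    have hthis := Finset.prod_add
      (fun c : Equiv.Perm (Fin N) => - C (∏ j ∈ c.support, d j))
      (fun c : Equiv.Perm (Fin N) => (X : Polynomial ℂ) ^ c.support.card)
      s.cycleFactorsFinset
    calc ∏ c ∈ s.cycleFactorsFinset,
          ((X : Polynomial ℂ) ^ c.support.card - C (∏ j ∈ c.support, d j))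
        = ∏ c ∈ s.cycleFactorsFinset,
          ((- C (∏ j ∈ c.support, d j)) + (X : Polynomial ℂ) ^ c.support.card) := by
          apply Finset.prod_congr rfl
          intro c _
          rw [sub_eq_neg_add]
      _ = ∑ T ∈ s.cycleFactorsFinset.powerset,
          (∏ c ∈ T, (- C (∏ j ∈ c.support, d j))) *
            ∏ c ∈ s.cycleFactorsFinset \ T, (X : Polynomial ℂ) ^ c.support.card := hthis
      _ = _ := by
          apply Finset.sum_congr rfl
          intro T _
          rw [Finset.prod_pow_eq_pow_sum]
  -- Step 4: the key term computation
  have termEq : ∀ (T : Finset (Equiv.Perm (Fin N))) (hTsub : T ⊆ s.cycleFactorsFinset),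
      ((Equiv.Perm.sign (Stmt5Aux.σT s T hTsub) : ℤ) : Polynomial ℂ) *
          ∏ i, charmatrix M (Stmt5Aux.σT s T hTsub i) i
        = (∏ c ∈ T, (- C (∏ j ∈ c.support, d j))) *
            X ^ (∑ c ∈ s.cycleFactorsFinset \ T, c.support.card) *
          ∏ j ∈ s.supportᶜ, (X - C (d j)) := by
    intro T hTsub
    set UT := T.biUnion (fun c => c.support) with hUT
    have hmemUT : ∀ i, i ∈ UT ↔ Stmt5Aux.cond T i := by
      intro i
      simp [hUT, Stmt5Aux.cond, Finset.mem_biUnion]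
    have hUTsub : UT ⊆ s.support := by
      intro i hi
      obtain ⟨c, hc, hic⟩ := Finset.mem_biUnion.mp hi
      exact Equiv.Perm.mem_cycleFactorsFinset_support_le (hTsub hc) hic
    have hdisj : ∀ c ∈ T, ∀ c' ∈ T, c ≠ c' → Disjoint c.support c'.support :=
      fun c hc c' hc' h => Stmt5Aux.disj_supports (hTsub hc) (hTsub hc') h
    have hinv_ne : ∀ i ∈ UT, s⁻¹ i ≠ i := by
      intro i hi
      obtain ⟨c, hc, hic⟩ := Finset.mem_biUnion.mp hi
      exact Stmt5Aux.ne_of_mem_support_cycle (hTsub hc) hic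
    have hsplit1 : ∏ i, charmatrix M (Stmt5Aux.σT s T hTsub i) i
        = (∏ i ∈ UT, (- C (d (s⁻¹ i)))) * ∏ i ∈ UTᶜ, charmatrix M i i := by
      rw [← Finset.prod_mul_prod_compl UT]
      congr 1
      · apply Finset.prod_congr rfl
        intro i hi
        rw [Stmt5Aux.σT_apply, if_pos ((hmemUT i).mp hi),
          charmatrix_apply_ne _ _ _ (hinv_ne i hi), hM,
          if_pos (Equiv.Perm.apply_inv_self s i)]
      · apply Finset.prod_congr rfl
        intro i hi
        rw [Stmt5Aux.σT_apply, if_neg (fun h => (Finset.mem_compl.mp hi) ((hmemUT i).mpr h))]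
    have hreindex : ∏ i ∈ UT, (- C (d (s⁻¹ i))) = ∏ i ∈ UT, (- C (d i)) := by
      apply Finset.prod_bij' (fun (i : Fin N) (_ : i ∈ UT) => s⁻¹ i)
        (fun (i : Fin N) (_ : i ∈ UT) => s i)
      · intro a ha
        rw [hmemUT] at ha ⊢
        exact (Stmt5Aux.cond_inv_iff hTsub a).mpr ha
      · intro a ha
        rw [hmemUT] at ha ⊢
        exact (Stmt5Aux.cond_apply_iff hTsub a).mpr ha
      · intro a _
        exact Equiv.Perm.apply_inv_self s a
      · intro a _
        exact Equiv.Perm.inv_apply_self s a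
      · intro a _
        rfl
    have hUTcard : UT.card = ∑ c ∈ T, c.support.card := Finset.card_biUnion hdisj
    have hUTprod : (∏ i ∈ UT, d i) = ∏ c ∈ T, ∏ j ∈ c.support, d j :=
      Finset.prod_biUnion (fun c hc c' hc' h => hdisj c hc c' hc' h)
    have hnegprod : ∏ i ∈ UT, (- C (d i))
        = (-1 : Polynomial ℂ) ^ (∑ c ∈ T, c.support.card) * C (∏ i ∈ UT, d i) := by
      calc ∏ i ∈ UT, (- C (d i)) = ∏ i ∈ UT, ((-1 : Polynomial ℂ) * C (d i)) := by
            apply Finset.prod_congr rfl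
            intro i _
            rw [neg_one_mul]
        _ = (∏ _i ∈ UT, (-1 : Polynomial ℂ)) * ∏ i ∈ UT, C (d i) := Finset.prod_mul_distrib
        _ = (-1 : Polynomial ℂ) ^ (∑ c ∈ T, c.support.card) * C (∏ i ∈ UT, d i) := by
            rw [Finset.prod_const, hUTcard, map_prod]
    have hcompl : UTᶜ = s.supportᶜ ∪ (s.support \ UT) := by
      ext i
      simp only [Finset.mem_compl, Finset.mem_union, Finset.mem_sdiff]
      constructor
      · intro h
        by_cases h2 : i ∈ s.support
        · exact Or.inr ⟨h2, h⟩
        · exact Or.inl h2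
      · rintro (h | ⟨h1, h2⟩)
        · exact fun hc => h (hUTsub hc)
        · exact h2
    have hdisj2 : Disjoint (s.supportᶜ) (s.support \ UT) := by
      rw [Finset.disjoint_left]
      intro a ha hb
      exact (Finset.mem_compl.mp ha) (Finset.mem_sdiff.mp hb).1
    have hfix : ∏ i ∈ s.supportᶜ, charmatrix M i i = ∏ i ∈ s.supportᶜ, (X - C (d i)) := by
      apply Finset.prod_congr rfl
      intro i hi
      have h1 : s i = i := by
        have h2 := Finset.mem_compl.mp hi
        rw [Equiv.Perm.mem_support, not_not] at h2
        exact h2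
      rw [charmatrix_apply_eq, hM, if_pos h1]
    have hmov : ∏ i ∈ s.support \ UT, charmatrix M i i
        = X ^ (∑ c ∈ s.cycleFactorsFinset \ T, c.support.card) := by
      have hset : s.support \ UT
          = (s.cycleFactorsFinset \ T).biUnion (fun c => c.support) := by
        ext i
        simp only [Finset.mem_sdiff, Finset.mem_biUnion]
        constructor
        · rintro ⟨h1, h2⟩
          obtain ⟨c, hc, hic⟩ :=
            Equiv.Perm.mem_support_iff_mem_support_of_mem_cycleFactorsFinset.mp h1
          exact ⟨c, ⟨hc, fun hcT => h2 ((hmemUT i).mpr ⟨c, hcT, hic⟩)⟩, hic⟩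
        · rintro ⟨c, ⟨hc, hcT⟩, hic⟩
          refine ⟨Equiv.Perm.mem_cycleFactorsFinset_support_le hc hic, fun hUT' => ?_⟩
          obtain ⟨c', hc', hic'⟩ := (hmemUT i).mp hUT'
          have hne : c ≠ c' := fun h => hcT (h ▸ hc')
          exact (Finset.disjoint_left.mp
            (Stmt5Aux.disj_supports hc (hTsub hc') hne)) hic hic'
      have hentry : ∀ i ∈ s.support \ UT, charmatrix M i i = X := by
        intro i hi
        have h1 : s i ≠ i := Equiv.Perm.mem_support.mp (Finset.mem_sdiff.mp hi).1
        rw [charmatrix_apply_eq, hM, if_neg h1, map_zero, sub_zero]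
      rw [Finset.prod_congr rfl hentry, Finset.prod_const, hset,
        Finset.card_biUnion (fun c hc c' hc' h =>
          Stmt5Aux.disj_supports ((Finset.mem_sdiff.mp hc).1)
            ((Finset.mem_sdiff.mp hc').1) h)]
    have hsign : ((Equiv.Perm.sign (Stmt5Aux.σT s T hTsub) : ℤ) : Polynomial ℂ)
        = ∏ c ∈ T, (-(-1 : Polynomial ℂ) ^ c.support.card) := by
      rw [Stmt5Aux.sign_σT]
      push_cast
      apply Finset.prod_congr rfl
      intro c hc
      rw [(Equiv.Perm.mem_cycleFactorsFinset_iff.mp (hTsub hc)).1.sign]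
      push_cast
      ring
    have hkey : (∏ c ∈ T, (-(-1 : Polynomial ℂ) ^ c.support.card)) *
          ((-1 : Polynomial ℂ) ^ (∑ c ∈ T, c.support.card) *
            C (∏ c ∈ T, ∏ j ∈ c.support, d j))
        = ∏ c ∈ T, (- C (∏ j ∈ c.support, d j)) := by
      rw [← Finset.prod_pow_eq_pow_sum, map_prod, ← Finset.prod_mul_distrib,
        ← Finset.prod_mul_distrib]
      apply Finset.prod_congr rfl
      intro c _
      have h2 : (-1 : Polynomial ℂ) ^ c.support.card *
          (-1 : Polynomial ℂ) ^ c.support.card = 1 := by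
        rw [← pow_add]
        exact Even.neg_one_pow ⟨c.support.card, rfl⟩
      calc (-(-1 : Polynomial ℂ) ^ c.support.card) *
            ((-1 : Polynomial ℂ) ^ c.support.card * C (∏ j ∈ c.support, d j))
          = -(((-1 : Polynomial ℂ) ^ c.support.card *
              (-1 : Polynomial ℂ) ^ c.support.card) * C (∏ j ∈ c.support, d j)) := by ring
        _ = - C (∏ j ∈ c.support, d j) := by rw [h2, one_mul]
    rw [hsplit1, hreindex, hnegprod, hcompl, Finset.prod_union hdisj2, hfix, hmov,
      hsign, hUTprod]
    rw [← hkey]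
    ring
  -- Step 5: assemble via the bijection between subsets of cycles and permutations
  rw [h1, hF, h2, Finset.sum_mul]
  refine Finset.sum_bij' (fun σ _ => Stmt5Aux.Tof s σ)
    (fun T hT => Stmt5Aux.σT s T (Finset.mem_powerset.mp hT)) ?_ ?_ ?_ ?_ ?_
  · intro σ _
    exact Finset.mem_powerset.mpr (Stmt5Aux.Tof_subset s σ)
  · intro T hT
    refine Finset.mem_filter.mpr ⟨Finset.mem_univ _, ?_⟩
    exact Stmt5Aux.Q_σT s T (Finset.mem_powerset.mp hT)
  · intro σ hσ
    exact Stmt5Aux.σT_Tof (Finset.mem_filter.mp hσ).2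
  · intro T hT
    exact Stmt5Aux.Tof_σT s T (Finset.mem_powerset.mp hT)
  · intro σ hσ
    conv_lhs => rw [← Stmt5Aux.σT_Tof (Finset.mem_filter.mp hσ).2]
    exact termEq (Stmt5Aux.Tof s σ) (Stmt5Aux.Tof_subset s σ)
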